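/- Every interval persistence module is indecomposable: it is nonzero and cannot be written as a direct sum of two nonzero persistence modules. -/

import Mathlib

open Classical

noncomputable section

/-- A point of the parameter space `ℝⁿ`. -/
abbrev Pt (n : ℕ) := Fin n → ℝ

/-- Shift of a point by the diagonal vector `(ε, …, ε)`. -/
def shiftPt {n : ℕ} (u : Pt n) (ε : ℝ) : Pt n := fun i => u i + ε

lemma shiftPt_mono {n : ℕ} {u v : Pt n} (ε : ℝ) (h : u ≤ v) :
    shiftPt u ε ≤ shiftPt v ε := fun i => add_le_add (h i) (le_refl ε)

lemma le_shiftPt {n : ℕ} (u : Pt n) {ε : ℝ} (hε : 0 ≤ ε) : u ≤ shiftPt u ε :=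
  fun i => le_add_of_nonneg_right hε

/-- An `n`-parameter persistence module over the field `k`. -/
structure PersMod (k : Type) [Field k] (n : ℕ) where
  obj : Pt n → Type
  [acg : ∀ u, AddCommGroup (obj u)]
  [mod : ∀ u, Module k (obj u)]
  map : ∀ {u v : Pt n}, u ≤ v → (obj u →ₗ[k] obj v)
  map_id : ∀ u : Pt n, map (le_refl u) = LinearMap.id
  map_comp : ∀ {u v w : Pt n} (h1 : u ≤ v) (h2 : v ≤ w),
    (map h2).comp (map h1) = map (h1.trans h2)

attribute [instance] PersMod.acg PersMod.mod

variable {k : Type} [Field k] {n : ℕ}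

/-- A morphism of persistence modules. -/
structure PersHom (M N : PersMod k n) where
  app : ∀ u, M.obj u →ₗ[k] N.obj u
  natural : ∀ {u v : Pt n} (h : u ≤ v),
    (app v).comp (M.map h) = (N.map h).comp (app u)

/-- A morphism is trivial when every component is the zero map. -/
def PersHom.Trivial {M N : PersMod k n} (f : PersHom M N) : Prop := ∀ u, f.app u = 0

/-- The `ε`-shift of a persistence module. -/
def PersMod.shift (M : PersMod k n) (ε : ℝ) : PersMod k n where
  obj u := M.obj (shiftPt u ε)
  map h := M.map (shiftPt_mono ε h)
  map_id u := M.map_id _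
  map_comp h1 h2 := M.map_comp _ _

/-- `(f, g)` is an `ε`-interleaving pair between `M` and `N`. -/
def IsInterleavingPair (M N : PersMod k n) (ε : ℝ) (hε : 0 ≤ ε)
    (f : PersHom M (N.shift ε)) (g : PersHom N (M.shift ε)) : Prop :=
  (∀ u : Pt n, (g.app (shiftPt u ε)).comp (f.app u) =
      M.map ((le_shiftPt u hε).trans (le_shiftPt _ hε))) ∧
  (∀ u : Pt n, (f.app (shiftPt u ε)).comp (g.app u) =
      N.map ((le_shiftPt u hε).trans (le_shiftPt _ hε)))

/-- `M` and `N` are `ε`-interleaved. -/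
def Interleaved (M N : PersMod k n) (ε : ℝ) : Prop :=
  ∃ (hε : 0 ≤ ε) (f : PersHom M (N.shift ε)) (g : PersHom N (M.shift ε)),
    IsInterleavingPair M N ε hε f g

/-- The interleaving distance, with value in the extended reals. -/
def interleavingDist (M N : PersMod k n) : EReal :=
  sInf {x : EReal | ∃ ε : ℝ, Interleaved M N ε ∧ x = (ε : EReal)}

/-- `M` is `ε`-trivial : all transition maps `M_u → M_{u+(ε,…,ε)}` vanish. -/
def EpsTrivial (M : PersMod k n) (ε : ℝ) : Prop :=
  ∀ (u : Pt n) (h : u ≤ shiftPt u ε), M.map h = 0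

/-- The zero persistence module. -/
def ZeroMod (k : Type) [Field k] (n : ℕ) : PersMod k n where
  obj _ := PUnit
  map _ := 0
  map_id _ := by apply LinearMap.ext; intro x; exact Subsingleton.elim _ _
  map_comp _ _ := by apply LinearMap.ext; intro x; exact Subsingleton.elim _ _

/-- The space at `u` of the interval module on `I` : all of `k` if `u ∈ I`, `0` otherwise. -/
def segSpace (k : Type) [Field k] {n : ℕ} (I : Set (Pt n)) (u : Pt n) : Submodule k k where
  carrier := {x | u ∉ I → x = 0}
  add_mem' := by intro x y hx hy h; simp only [Set.mem_setOf_eq] at *; rw [hx h, hy h, add_zero]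
  zero_mem' := fun _ => rfl
  smul_mem' := by intro c x hx h; simp only [Set.mem_setOf_eq] at *; rw [hx h, smul_zero]

/-- The interval persistence module on an order-convex set `I` : `k` on `I` with identity
internal transition maps, `0` elsewhere. -/
def IntervalMod (k : Type) [Field k] {n : ℕ} (I : Set (Pt n)) (hI : I.OrdConnected) :
    PersMod k n where
  obj u := segSpace k I u
  map {u v} h :=
    { toFun := fun x => ⟨if v ∈ I then (x : k) else 0, by intro hv; simp [hv]⟩
      map_add' := by intro x y; apply Subtype.ext; by_cases hv : v ∈ I <;> simp [hv]
      map_smul' := by intro c x; apply Subtype.ext; by_cases hv : v ∈ I <;> simp [hv] }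
  map_id u := by
    apply LinearMap.ext; intro x
    apply Subtype.ext
    by_cases hu : u ∈ I
    · simp [hu]
    · simp [hu, x.2 hu]
  map_comp {u v w} h1 h2 := by
    apply LinearMap.ext; intro x
    apply Subtype.ext
    by_cases hw : w ∈ I
    · by_cases hv : v ∈ I
      · simp [hw, hv]
      · by_cases hu : u ∈ I
        · exact absurd (hI.out hu hw ⟨h1, h2⟩) hv
        · simp [hw, hv, x.2 hu]
    · simp [hw]

/-- The open box `∏ᵢ (aᵢ, bᵢ)` with extended-real endpoints. -/
def box {n : ℕ} (a b : Fin n → EReal) : Set (Pt n) :=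
  {u | ∀ i, a i < (u i : EReal) ∧ (u i : EReal) < b i}

lemma box_ordConnected {n : ℕ} (a b : Fin n → EReal) : (box a b).OrdConnected := by
  constructor
  intro u hu w hw v hv i
  exact ⟨lt_of_lt_of_le (hu i).1 (by exact_mod_cast hv.1 i),
    lt_of_le_of_lt (by exact_mod_cast hv.2 i) (hw i).2⟩

/-- The rectangle persistence module with underlying open rectangle `∏ᵢ (aᵢ, bᵢ)`. -/
def RectMod (k : Type) [Field k] {n : ℕ} (a b : Fin n → EReal) : PersMod k n :=
  IntervalMod k (box a b) (box_ordConnected a b)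

/-- Subtraction of extended reals with the conventions `(±∞) − (±∞) = 0`. -/
def esub (x y : EReal) : EReal :=
  if (x = ⊤ ∧ y = ⊤) ∨ (x = ⊥ ∧ y = ⊥) then 0 else x - y

/-- Absolute value on the extended reals (`|±∞| = +∞`). -/
def eabs (x : EReal) : EReal := max x (-x)

/-- The `ℓ^∞`-distance `‖x − y‖_∞` on extended `ℝⁿ`. -/
def supDist {n : ℕ} (x y : Fin n → EReal) : EReal := ⨆ i, eabs (esub (x i) (y i))

/-- The closed formula for the interleaving distance between the rectangle modules with
rectangles `∏ (aᵢ, bᵢ)` and `∏ (cᵢ, dᵢ)`. -/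
def dIFormula {n : ℕ} (a b c d : Fin n → EReal) : EReal :=
  min (max (⨅ i, esub (b i) (a i) / 2) (⨅ i, esub (d i) (c i) / 2))
      (max (supDist c a) (supDist d b))

/-- `M` and `N` are isomorphic persistence modules. -/
def PersIso (M N : PersMod k n) : Prop :=
  ∃ f : PersHom M N, ∀ u, Function.Bijective (f.app u)

/-- `M` is a non-zero persistence module. -/
def PersMod.Nonzero (M : PersMod k n) : Prop := ∃ (u : Pt n) (x : M.obj u), x ≠ 0

/-- Direct sum of two persistence modules. -/
def dirSum (M N : PersMod k n) : PersMod k n where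
  obj u := M.obj u × N.obj u
  map h := (M.map h).prodMap (N.map h)
  map_id u := by
    apply LinearMap.ext; intro x
    show ((M.map (le_refl u)) x.1, (N.map (le_refl u)) x.2) = x
    rw [M.map_id, N.map_id]; rfl
  map_comp h1 h2 := by
    apply LinearMap.ext; intro x
    show ((M.map _) ((M.map _) x.1), (N.map _) ((N.map _) x.2))
      = ((M.map _) x.1, (N.map _) x.2)
    have hM : (M.map h2) ((M.map h1) x.1) = (M.map (h1.trans h2)) x.1 := by
      rw [← M.map_comp h1 h2]; rfl
    have hN : (N.map h2) ((N.map h1) x.2) = (N.map (h1.trans h2)) x.2 := by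
      rw [← N.map_comp h1 h2]; rfl
    rw [hM, hN]

/-- Zigzag-connectedness of a subset of `ℝⁿ`. -/
def ZigzagConnected {n : ℕ} (I : Set (Pt n)) : Prop :=
  ∀ u ∈ I, ∀ v ∈ I,
    Relation.ReflTransGen (fun x y => x ∈ I ∧ y ∈ I ∧ (x ≤ y ∨ y ≤ x)) u v

/-- `I` is an interval in `ℝⁿ`: nonempty, order-convex and zigzag-connected. -/
def IsInterval {n : ℕ} (I : Set (Pt n)) : Prop :=
  I.Nonempty ∧ I.OrdConnected ∧ ZigzagConnected I

/-- A partial multibijection `Fin m ⇸ Fin k'`, encoded by an `Option`-valued map that is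
injective on matched indices. -/
def PartialInj {m k' : ℕ} (σ : Fin m → Option (Fin k')) : Prop :=
  ∀ i j l, σ i = some l → σ j = some l → i = j

/-- `σ` is an `ε`-matching between the barcodes `A` and `B` (families of intervals). -/
def IsEpsMatching (k : Type) [Field k] {n m k' : ℕ}
    (A : Fin m → Set (Pt n)) (hA : ∀ i, (A i).OrdConnected)
    (B : Fin k' → Set (Pt n)) (hB : ∀ j, (B j).OrdConnected)
    (σ : Fin m → Option (Fin k')) (ε : ℝ) : Prop :=
  PartialInj σ ∧
  (∀ i, σ i = none → EpsTrivial (IntervalMod k (A i) (hA i)) (2 * ε)) ∧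
  (∀ j, (∀ i, σ i ≠ some j) → EpsTrivial (IntervalMod k (B j) (hB j)) (2 * ε)) ∧
  (∀ i j, σ i = some j →
    Interleaved (IntervalMod k (A i) (hA i)) (IntervalMod k (B j) (hB j)) ε)

/-- The bottleneck distance between the interval decomposable modules with barcodes
`A` and `B`. -/
def bottleneckDist (k : Type) [Field k] {n m k' : ℕ}
    (A : Fin m → Set (Pt n)) (hA : ∀ i, (A i).OrdConnected)
    (B : Fin k' → Set (Pt n)) (hB : ∀ j, (B j).OrdConnected) : EReal :=
  sInf {x : EReal | ∃ (ε : ℝ) (σ : Fin m → Option (Fin k')),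
    0 ≤ ε ∧ IsEpsMatching k A hA B hB σ ε ∧ x = (ε : EReal)}

/-- The canonical generator of the interval module at a point of the interval. -/
def eOne (k : Type) [Field k] {n : ℕ} (I : Set (Pt n)) (hI : I.OrdConnected)
    (u : Pt n) (hu : u ∈ I) : (IntervalMod k I hI).obj u :=
  ⟨1, fun h => absurd hu h⟩

lemma eOne_ne_zero (I : Set (Pt n)) (hI : I.OrdConnected) (u : Pt n) (hu : u ∈ I) :
    eOne k I hI u hu ≠ 0 := by
  intro h
  exact one_ne_zero (congrArg Subtype.val h)

lemma eOne_map (I : Set (Pt n)) (hI : I.OrdConnected) {u v : Pt n}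
    (hu : u ∈ I) (hv : v ∈ I) (h : u ≤ v) :
    (IntervalMod k I hI).map h (eOne k I hI u hu) = eOne k I hI v hv := by
  apply Subtype.ext
  show (if v ∈ I then (eOne k I hI u hu).val else 0) = 1
  rw [if_pos hv]
  rfl

lemma eOne_smul (I : Set (Pt n)) (hI : I.OrdConnected) (u : Pt n) (hu : u ∈ I)
    (w : (IntervalMod k I hI).obj u) : w = w.val • eOne k I hI u hu := by
  apply Subtype.ext
  show w.val = w.val • (1 : k)
  rw [smul_eq_mul, mul_one]

theorem intervalMod_indecomposable (I : Set (Pt n)) (hI : I.OrdConnected)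
    (hint : IsInterval I) :
    (IntervalMod k I hI).Nonzero ∧
      ¬ ∃ M₁ M₂ : PersMod k n, M₁.Nonzero ∧ M₂.Nonzero ∧
        PersIso (IntervalMod k I hI) (dirSum M₁ M₂) := by
  obtain ⟨⟨u₀, hu₀⟩, _hconv, hzig⟩ := hint
  constructor
  · exact ⟨u₀, eOne k I hI u₀ hu₀, eOne_ne_zero I hI u₀ hu₀⟩
  rintro ⟨M₁, M₂, h₁, h₂, f, hbij⟩
  -- Every element of the direct sum at a point of `I` is a multiple of `f (eOne)`.
  have hspan : ∀ (u : Pt n) (hu : u ∈ I) (z : (dirSum M₁ M₂).obj u),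
      ∃ c : k, z = c • (f.app u (eOne k I hI u hu)) := by
    intro u hu z
    obtain ⟨w, hw⟩ := (hbij u).2 z
    refine ⟨w.val, ?_⟩
    calc z = f.app u w := hw.symm
      _ = f.app u (w.val • eOne k I hI u hu) := by rw [← eOne_smul]
      _ = w.val • f.app u (eOne k I hI u hu) := map_smul (f.app u) w.val (eOne k I hI u hu)
  -- `f (eOne)` is nonzero at points of `I`.
  have hne : ∀ (u : Pt n) (hu : u ∈ I), f.app u (eOne k I hI u hu) ≠ 0 := by
    intro u hu h
    exact eOne_ne_zero I hI u hu ((hbij u).1 (by rw [h, map_zero]))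
  -- Outside `I` everything vanishes.
  have hout : ∀ (u : Pt n), u ∉ I → ∀ z : (dirSum M₁ M₂).obj u, z = 0 := by
    intro u hu z
    obtain ⟨w, hw⟩ := (hbij u).2 z
    have hw0 : w = 0 := Subtype.ext (w.2 hu)
    rw [← hw, hw0, map_zero]
  -- If the second component of `f (eOne)` is nonzero, then `M₁` vanishes at `u`.
  have hM1zero : ∀ (u : Pt n) (hu : u ∈ I),
      (f.app u (eOne k I hI u hu)).2 ≠ 0 → ∀ y : M₁.obj u, y = 0 := by
    intro u hu hp2 y
    obtain ⟨c, hc⟩ := hspan u hu (y, 0)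
    have h2 : (0 : M₂.obj u) = c • (f.app u (eOne k I hI u hu)).2 :=
      congrArg Prod.snd hc
    have hc0 : c = 0 := by
      rcases (smul_eq_zero.mp h2.symm) with h | h
      · exact h
      · exact absurd h hp2
    have h1 : y = c • (f.app u (eOne k I hI u hu)).1 := congrArg Prod.fst hc
    rw [h1, hc0, zero_smul]
  have hM2zero : ∀ (u : Pt n) (hu : u ∈ I),
      (f.app u (eOne k I hI u hu)).1 ≠ 0 → ∀ y : M₂.obj u, y = 0 := by
    intro u hu hp1 y
    obtain ⟨c, hc⟩ := hspan u hu (0, y)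
    have h1 : (0 : M₁.obj u) = c • (f.app u (eOne k I hI u hu)).1 :=
      congrArg Prod.fst hc
    have hc0 : c = 0 := by
      rcases (smul_eq_zero.mp h1.symm) with h | h
      · exact h
      · exact absurd h hp1
    have h2 : y = c • (f.app u (eOne k I hI u hu)).2 := congrArg Prod.snd hc
    rw [h2, hc0, zero_smul]
  -- The "side" is preserved along comparable pairs in `I`.
  have hstep : ∀ (u v : Pt n) (hu : u ∈ I) (hv : v ∈ I), u ≤ v →
      ((f.app u (eOne k I hI u hu)).2 = 0 ↔ (f.app v (eOne k I hI v hv)).2 = 0) := by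
    intro u v hu hv h
    have hnat := LinearMap.congr_fun (f.natural h) (eOne k I hI u hu)
    simp only [LinearMap.comp_apply] at hnat
    rw [eOne_map I hI hu hv h] at hnat
    have hq : f.app v (eOne k I hI v hv) =
        (M₁.map h (f.app u (eOne k I hI u hu)).1,
         M₂.map h (f.app u (eOne k I hI u hu)).2) := hnat
    constructor
    · intro hp2
      have : (f.app v (eOne k I hI v hv)).2 = M₂.map h (f.app u (eOne k I hI u hu)).2 :=
        congrArg Prod.snd hq
      rw [this, hp2, map_zero]
    · intro hq2
      by_contra hp2
      have hp1 : (f.app u (eOne k I hI u hu)).1 = 0 := hM1zero u hu hp2 _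
      have hq1 : (f.app v (eOne k I hI v hv)).1 = 0 := by
        have : (f.app v (eOne k I hI v hv)).1 = M₁.map h (f.app u (eOne k I hI u hu)).1 :=
          congrArg Prod.fst hq
        rw [this, hp1, map_zero]
      exact hne v hv (Prod.ext hq1 hq2)
  -- The side is constant on `I` by zigzag-connectedness.
  have hconst : ∀ (v : Pt n) (hv : v ∈ I),
      ((f.app u₀ (eOne k I hI u₀ hu₀)).2 = 0 ↔ (f.app v (eOne k I hI v hv)).2 = 0) := by
    have hall : ∀ v : Pt n,
        Relation.ReflTransGen (fun x y => x ∈ I ∧ y ∈ I ∧ (x ≤ y ∨ y ≤ x)) u₀ v →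
        ∀ hv : v ∈ I,
        ((f.app u₀ (eOne k I hI u₀ hu₀)).2 = 0 ↔ (f.app v (eOne k I hI v hv)).2 = 0) := by
      intro v hchain
      induction hchain with
      | refl => intro hv; exact Iff.rfl
      | tail _hbc hrel ih =>
        intro hv
        obtain ⟨hb, hc, hle | hle⟩ := hrel
        · exact (ih hb).trans (hstep _ _ hb hc hle)
        · exact (ih hb).trans (hstep _ _ hc hb hle).symm
    intro v hv
    exact hall v (hzig u₀ hu₀ v hv) hv
  by_cases hS : (f.app u₀ (eOne k I hI u₀ hu₀)).2 = 0
  · -- then `M₂` is zero everywhere, contradicting `h₂`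
    obtain ⟨u, x, hx⟩ := h₂
    apply hx
    by_cases hu : u ∈ I
    · have hS' := (hconst u hu).1 hS
      have hp1 : (f.app u (eOne k I hI u hu)).1 ≠ 0 := by
        intro h
        exact hne u hu (Prod.ext h hS')
      exact hM2zero u hu hp1 x
    · have := hout u hu ((0 : M₁.obj u), x)
      exact congrArg Prod.snd this
  · -- then `M₁` is zero everywhere, contradicting `h₁`
    obtain ⟨u, x, hx⟩ := h₁
    apply hx
    by_cases hu : u ∈ I
    · have hS' : (f.app u (eOne k I hI u hu)).2 ≠ 0 := fun h => hS ((hconst u hu).2 h)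
      exact hM1zero u hu hS' x
    · have := hout u hu (x, (0 : M₂.obj u))
      exact congrArg Prod.fst this

end
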